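/- Let ℓ be a prime and m ≥ 1, i ≥ 1 integers. Then the commutator subgroup D_{i,m}' = [D_{i,m}, D_{i,m}] of the iterated wreath product D_{i,m} satisfies ℓ^((ℓ^i−1)/(ℓ−1) + i − 1) · k(D_{i,m}') ≥ m^(ℓ^i − 1), where (ℓ^i−1)/(ℓ−1) = 1 + ℓ + ⋯ + ℓ^{i−1} and k(D_{i,m}') denotes the number of conjugacy classes of the group D_{i,m}'. -/

import Mathlib

/-- The shift automorphism of `ZMod n → H` by `c : ZMod n`: `(c • f) x = f (x - c)`. -/
def shiftAut (H : Type*) [Group H] (n : ℕ) (c : ZMod n) : MulAut (ZMod n → H) where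
  toFun f := fun x => f (x - c)
  invFun f := fun x => f (x + c)
  left_inv f := funext fun x => by simp
  right_inv f := funext fun x => by simp
  map_mul' f g := rfl

/-- The action of the cyclic group `C_n = Multiplicative (ZMod n)` on `ZMod n → H`
by shifting: `(c • f) x = f (x - c)`. -/
def wreathAction (H : Type*) [Group H] (n : ℕ) :
    Multiplicative (ZMod n) →* MulAut (ZMod n → H) where
  toFun c := shiftAut H n c.toAdd
  map_one' := by
    ext f x
    show f (x - (1 : Multiplicative (ZMod n)).toAdd) = f x
    rw [toAdd_one, sub_zero]
  map_mul' c d := by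
    ext f x
    show f (x - (c.toAdd + d.toAdd)) = f (x - c.toAdd - d.toAdd)
    rw [sub_sub]

/-- The wreath product `H ≀ C_n`: the semidirect product `(ZMod n → H) ⋊ C_n`,
where `c ∈ C_n = ZMod n` acts on `f : ZMod n → H` by `(c • f) x = f (x - c)`. -/
abbrev WreathCyclic (H : Type*) [Group H] (n : ℕ) : Type _ :=
  SemidirectProduct (ZMod n → H) (Multiplicative (ZMod n)) (wreathAction H n)

/-- The iterated wreath product `D_{i,m} = C_m ≀ C_ℓ ≀ ⋯ ≀ C_ℓ` (with `i` factors `C_ℓ`),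
bundled together with its group structure. -/
noncomputable def iterWreathAux (ℓ m : ℕ) : ℕ → (T : Type) × Group T
  | 0 => ⟨Multiplicative (ZMod m), inferInstance⟩
  | i + 1 =>
    let p := iterWreathAux ℓ m i
    letI : Group p.1 := p.2
    ⟨WreathCyclic p.1 ℓ, inferInstance⟩

/-- The iterated wreath product `D_{i,m} = C_m ≀ C_ℓ ≀ ⋯ ≀ C_ℓ` with `i` factors `C_ℓ`. -/
noncomputable def IterWreath (ℓ m i : ℕ) : Type := (iterWreathAux ℓ m i).1

noncomputable instance (ℓ m i : ℕ) : Group (IterWreath ℓ m i) := (iterWreathAux ℓ m i).2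

/-! ### auxiliary -/

/-- The abelian group `C_m^{ℓ^i}`. -/
def ProdPow (ℓ m : ℕ) : ℕ → Type
  | 0 => Multiplicative (ZMod m)
  | i + 1 => ZMod ℓ → ProdPow ℓ m i

instance prodPowCommGroup (ℓ m : ℕ) : ∀ i, CommGroup (ProdPow ℓ m i)
  | 0 => inferInstanceAs (CommGroup (Multiplicative (ZMod m)))
  | i + 1 => letI := prodPowCommGroup ℓ m i
             inferInstanceAs (CommGroup (ZMod ℓ → ProdPow ℓ m i))

/-- Product over all coordinates, as a monoid hom. -/
def piProdHom (ι : Type*) [Fintype ι] (B : Type*) [CommGroup B] : (ι → B) →* B :=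
  MonoidHom.mk' (fun g => ∏ x, g x)
    (fun g h => by simp [Finset.prod_mul_distrib])

def wNorm (ℓ m : ℕ) [NeZero ℓ] : ∀ i, ProdPow ℓ m i →* Multiplicative (ZMod m)
  | 0 => MonoidHom.id _
  | i + 1 => (wNorm ℓ m i).comp (piProdHom (ZMod ℓ) (ProdPow ℓ m i))

/-- The abelian group `C_m × C_ℓ^i`. -/
def Tgt (ℓ m : ℕ) : ℕ → Type
  | 0 => Multiplicative (ZMod m)
  | i + 1 => Tgt ℓ m i × Multiplicative (ZMod ℓ)

instance tgtCommGroup (ℓ m : ℕ) : ∀ i, CommGroup (Tgt ℓ m i)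
  | 0 => inferInstanceAs (CommGroup (Multiplicative (ZMod m)))
  | i + 1 => letI := tgtCommGroup ℓ m i
             inferInstanceAs (CommGroup (Tgt ℓ m i × Multiplicative (ZMod ℓ)))

private lemma conj_comm {T : Type*} [CommGroup T] (a b : T) : a * b * a⁻¹ = b := by
  rw [mul_comm a b, mul_inv_cancel_right]

/-- The projection onto the abelianization target. -/
noncomputable def projHom (ℓ m : ℕ) [NeZero ℓ] : ∀ i, IterWreath ℓ m i →* Tgt ℓ m i
  | 0 => MonoidHom.id _
  | i + 1 =>
    letI f1 : (ZMod ℓ → IterWreath ℓ m i) →* Tgt ℓ m i :=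
      (piProdHom (ZMod ℓ) (Tgt ℓ m i)).comp (MonoidHom.compLeft (projHom ℓ m i) (ZMod ℓ))
    show WreathCyclic (IterWreath ℓ m i) ℓ →* Tgt ℓ m i × Multiplicative (ZMod ℓ) from
    SemidirectProduct.lift ((MonoidHom.inl _ _).comp f1) (MonoidHom.inr _ _)
      (fun c => MonoidHom.ext fun n => by
        have h1 : (∏ x, projHom ℓ m i (n (x - c.toAdd))) = ∏ x, projHom ℓ m i (n x) :=
          Equiv.prod_comp (Equiv.subRight c.toAdd) (fun y => projHom ℓ m i (n y))
        show ((MonoidHom.inl (Tgt ℓ m i) (Multiplicative (ZMod ℓ)))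
              (∏ x, projHom ℓ m i (n (x - c.toAdd))))
            = MulAut.conj ((MonoidHom.inr (Tgt ℓ m i) (Multiplicative (ZMod ℓ))) c)
                ((MonoidHom.inl (Tgt ℓ m i) (Multiplicative (ZMod ℓ)))
                  (∏ x, projHom ℓ m i (n x)))
        rw [h1, MulAut.conj_apply, conj_comm])

/-- The embedding of the base `C_m^{ℓ^i}` into `D_{i,m}`. -/
noncomputable def embHom (ℓ m : ℕ) : ∀ i, ProdPow ℓ m i →* IterWreath ℓ m i
  | 0 => MonoidHom.id _
  | i + 1 =>
    show (ZMod ℓ → ProdPow ℓ m i) →* WreathCyclic (IterWreath ℓ m i) ℓ from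
    (SemidirectProduct.inl : _ →* WreathCyclic (IterWreath ℓ m i) ℓ).comp
      (MonoidHom.compLeft (embHom ℓ m i) (ZMod ℓ))

def sdpEquivProd {N G : Type*} [Group N] [Group G] {φ : G →* MulAut N} :
    (N ⋊[φ] G) ≃ N × G where
  toFun x := (x.left, x.right)
  invFun p := ⟨p.1, p.2⟩
  left_inv x := rfl
  right_inv p := rfl

lemma card_sdp {N G : Type*} [Group N] [Group G] (φ : G →* MulAut N) :
    Nat.card (N ⋊[φ] G) = Nat.card N * Nat.card G := by
  rw [Nat.card_congr (sdpEquivProd (φ := φ)), Nat.card_prod]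

lemma finite_sdp {N G : Type*} [Group N] [Group G] (φ : G →* MulAut N)
    [Finite N] [Finite G] : Finite (N ⋊[φ] G) :=
  Finite.of_equiv _ (sdpEquivProd (φ := φ)).symm

lemma finite_prodPow (ℓ m : ℕ) [NeZero ℓ] [NeZero m] : ∀ i, Finite (ProdPow ℓ m i)
  | 0 => inferInstanceAs (Finite (Multiplicative (ZMod m)))
  | i + 1 => by
      haveI := finite_prodPow ℓ m i
      exact inferInstanceAs (Finite (ZMod ℓ → ProdPow ℓ m i))

lemma finite_iterWreath (ℓ m : ℕ) [NeZero ℓ] [NeZero m] : ∀ i, Finite (IterWreath ℓ m i)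
  | 0 => inferInstanceAs (Finite (Multiplicative (ZMod m)))
  | i + 1 => by
      haveI := finite_iterWreath ℓ m i
      exact finite_sdp (wreathAction (IterWreath ℓ m i) ℓ)

lemma finite_tgt (ℓ m : ℕ) [NeZero ℓ] [NeZero m] : ∀ i, Finite (Tgt ℓ m i)
  | 0 => inferInstanceAs (Finite (Multiplicative (ZMod m)))
  | i + 1 => by
      haveI := finite_tgt ℓ m i
      exact inferInstanceAs (Finite (Tgt ℓ m i × Multiplicative (ZMod ℓ)))

lemma card_multiplicative_zmod (m : ℕ) : Nat.card (Multiplicative (ZMod m)) = m := by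
  rw [Nat.card_congr Multiplicative.toAdd, Nat.card_zmod]

lemma card_prodPow (ℓ m : ℕ) [NeZero ℓ] : ∀ i, Nat.card (ProdPow ℓ m i) = m ^ ℓ ^ i
  | 0 => by
      show Nat.card (Multiplicative (ZMod m)) = m ^ ℓ ^ 0
      rw [card_multiplicative_zmod, pow_zero, pow_one]
  | i + 1 => by
      show Nat.card (ZMod ℓ → ProdPow ℓ m i) = m ^ ℓ ^ (i + 1)
      rw [Nat.card_fun, card_prodPow ℓ m i, Nat.card_zmod, ← pow_mul, ← pow_succ]

/-- `geomSum ℓ i = 1 + ℓ + ⋯ + ℓ^{i-1}`. -/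
def geomS (ℓ : ℕ) : ℕ → ℕ
  | 0 => 0
  | i + 1 => geomS ℓ i * ℓ + 1

lemma card_iterWreath (ℓ m : ℕ) [NeZero ℓ] [NeZero m] :
    ∀ i, Nat.card (IterWreath ℓ m i) = m ^ ℓ ^ i * ℓ ^ geomS ℓ i
  | 0 => by
      show Nat.card (Multiplicative (ZMod m)) = m ^ ℓ ^ 0 * ℓ ^ geomS ℓ 0
      rw [card_multiplicative_zmod, pow_zero, pow_one, geomS, pow_zero, mul_one]
  | i + 1 => by
      haveI := finite_iterWreath ℓ m i
      show Nat.card (WreathCyclic (IterWreath ℓ m i) ℓ) = _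
      rw [card_sdp, Nat.card_fun, card_iterWreath ℓ m i, Nat.card_zmod,
        card_multiplicative_zmod]
      show (m ^ ℓ ^ i * ℓ ^ geomS ℓ i) ^ ℓ * ℓ = m ^ ℓ ^ (i + 1) * ℓ ^ (geomS ℓ i * ℓ + 1)
      rw [mul_pow, ← pow_mul, ← pow_mul, pow_succ ℓ i, mul_assoc, pow_succ]

lemma card_tgt (ℓ m : ℕ) [NeZero ℓ] : ∀ i, Nat.card (Tgt ℓ m i) = m * ℓ ^ i
  | 0 => by
      show Nat.card (Multiplicative (ZMod m)) = m * ℓ ^ 0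
      rw [card_multiplicative_zmod, pow_zero, mul_one]
  | i + 1 => by
      show Nat.card (Tgt ℓ m i × Multiplicative (ZMod ℓ)) = m * ℓ ^ (i + 1)
      rw [Nat.card_prod, card_tgt ℓ m i, card_multiplicative_zmod, pow_succ, mul_assoc]

lemma wNorm_surjective (ℓ m : ℕ) [NeZero ℓ] : ∀ i, Function.Surjective (wNorm ℓ m i)
  | 0 => Function.surjective_id
  | i + 1 => fun t => by
      obtain ⟨b, hb⟩ := wNorm_surjective ℓ m i t
      refine ⟨Pi.mulSingle (0 : ZMod ℓ) b, ?_⟩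
      show wNorm ℓ m i (∏ x, (Pi.mulSingle (0 : ZMod ℓ) b : ZMod ℓ → ProdPow ℓ m i) x) = t
      rw [Fintype.prod_pi_mulSingle', hb]

lemma projHom_surjective (ℓ m : ℕ) [NeZero ℓ] : ∀ i, Function.Surjective (projHom ℓ m i)
  | 0 => Function.surjective_id
  | i + 1 => fun t => by
      obtain ⟨d, hd⟩ := projHom_surjective ℓ m i t.1
      refine ⟨(⟨Pi.mulSingle (0 : ZMod ℓ) d, Multiplicative.ofAdd t.2.toAdd⟩ :
        WreathCyclic (IterWreath ℓ m i) ℓ), ?_⟩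
      show ((MonoidHom.inl (Tgt ℓ m i) (Multiplicative (ZMod ℓ)))
          (∏ x, projHom ℓ m i ((Pi.mulSingle (0 : ZMod ℓ) d : ZMod ℓ → IterWreath ℓ m i) x)) *
          (MonoidHom.inr (Tgt ℓ m i) (Multiplicative (ZMod ℓ))) (Multiplicative.ofAdd t.2.toAdd)) = t
      have : (∏ x, projHom ℓ m i ((Pi.mulSingle (0 : ZMod ℓ) d : ZMod ℓ → IterWreath ℓ m i) x)) = t.1 := by
        rw [Fintype.prod_eq_single (0 : ZMod ℓ)
          (fun x hx => by rw [Pi.mulSingle_eq_of_ne hx, map_one]),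
          Pi.mulSingle_eq_same, hd]
      rw [this]
      ext <;> simp

lemma embHom_injective (ℓ m : ℕ) : ∀ i, Function.Injective (embHom ℓ m i)
  | 0 => fun a b h => h
  | i + 1 => by
      intro a b h
      have h2 : (fun x => embHom ℓ m i (a x)) = fun x => embHom ℓ m i (b x) :=
        SemidirectProduct.inl_injective (φ := wreathAction (IterWreath ℓ m i) ℓ) h
      funext x
      exact embHom_injective ℓ m i (congrFun h2 x)

lemma map_mem_commutator {G H : Type*} [Group G] [Group H] (f : G →* H) {x : G}
    (hx : x ∈ commutator G) : f x ∈ commutator H := by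
  have h : Subgroup.map f (commutator G) ≤ commutator H := by
    rw [commutator_def, commutator_def, Subgroup.map_commutator]
    exact Subgroup.commutator_mono le_top le_top
  exact h ⟨x, hx, rfl⟩

/-- Shift of a `mulSingle` at `0` is a `mulSingle`. -/
lemma wreathAction_mulSingle (ℓ : ℕ) [NeZero ℓ] {D : Type*} [Group D]
    (c : ZMod ℓ) (a : D) :
    wreathAction D ℓ (Multiplicative.ofAdd c) (Pi.mulSingle (0 : ZMod ℓ) a)
      = Pi.mulSingle c a := by
  funext x
  show (Pi.mulSingle (0 : ZMod ℓ) a : ZMod ℓ → D) (x - c) = (Pi.mulSingle c a : ZMod ℓ → D) x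
  rcases eq_or_ne x c with rfl | hx
  · rw [sub_self, Pi.mulSingle_eq_same, Pi.mulSingle_eq_same]
  · rw [Pi.mulSingle_eq_of_ne (sub_ne_zero.mpr hx), Pi.mulSingle_eq_of_ne hx]

lemma emb_mem_commutator (ℓ m : ℕ) [NeZero ℓ] :
    ∀ i (g : ProdPow ℓ m i), wNorm ℓ m i g = 1 →
      embHom ℓ m i g ∈ commutator (IterWreath ℓ m i)
  | 0, g, hg => by
      have hg1 : g = 1 := hg
      rw [hg1, map_one]
      exact (commutator _).one_mem
  | i + 1, g, hg => by
      set D := IterWreath ℓ m i with hD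
      set W := WreathCyclic D ℓ with hW
      letI : Group W := inferInstance
      set φ : W →* Abelianization W := Abelianization.of with hφ
      -- the embedded element
      set u : ZMod ℓ → D := fun x => embHom ℓ m i (g x) with hu
      have goal_iff : embHom ℓ m (i + 1) g ∈ commutator (IterWreath ℓ m (i + 1)) ↔
          φ (SemidirectProduct.inl u) = 1 := by
        rw [hφ]
        exact (QuotientGroup.eq_one_iff _).symm
      rw [goal_iff]
      -- two homs (ZMod ℓ → D) →* Abelianization W
      set ψ : (ZMod ℓ → D) →* Abelianization W :=
        φ.comp (SemidirectProduct.inl : _ →* W) with hψ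
      set F : D →* Abelianization W :=
        φ.comp ((SemidirectProduct.inl : _ →* W).comp
          (MonoidHom.mulSingle (fun _ : ZMod ℓ => D) 0)) with hF
      set χ : (ZMod ℓ → D) →* Abelianization W :=
        ∏ x : ZMod ℓ, F.comp (Pi.evalMonoidHom (fun _ : ZMod ℓ => D) x) with hχ
      have key : ∀ (c : ZMod ℓ) (a : D),
          φ (SemidirectProduct.inl (Pi.mulSingle c a)) =
            φ (SemidirectProduct.inl (Pi.mulSingle (0 : ZMod ℓ) a)) := by
        intro c a
        rw [← wreathAction_mulSingle ℓ c a, SemidirectProduct.inl_aut,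
          map_mul, map_mul, map_inv]
        exact conj_comm _ _
      have hψχ : ψ = χ := by
        refine MonoidHom.pi_ext (fun j a => ?_)
        have h1 : ψ (Pi.mulSingle j a) = φ (SemidirectProduct.inl (Pi.mulSingle (0 : ZMod ℓ) a)) :=
          key j a
        have h2 : χ (Pi.mulSingle j a) =
            φ (SemidirectProduct.inl (Pi.mulSingle (0 : ZMod ℓ) a)) := by
          rw [hχ, MonoidHom.finset_prod_apply]
          rw [Fintype.prod_eq_single j (fun x hx => ?_)]
          · show F ((Pi.mulSingle j a : ZMod ℓ → D) j) = _
            rw [Pi.mulSingle_eq_same]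
            rfl
          · show F ((Pi.mulSingle j a : ZMod ℓ → D) x) = 1
            rw [Pi.mulSingle_eq_of_ne hx, map_one]
        rw [h1, h2]
      -- now compute
      have hval : φ (SemidirectProduct.inl u) = F (embHom ℓ m i (∏ x, g x)) := by
        have : ψ u = χ u := by rw [hψχ]
        rw [hψ] at this
        rw [show φ (SemidirectProduct.inl u) = ψ u from rfl, this, hχ,
          MonoidHom.finset_prod_apply]
        have : ∀ x : ZMod ℓ, (F.comp (Pi.evalMonoidHom (fun _ : ZMod ℓ => D) x)) u
            = (F.comp (embHom ℓ m i)) (g x) := fun x => rfl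
        rw [Finset.prod_congr rfl (fun x _ => this x),
          ← map_prod (F.comp (embHom ℓ m i)) (g : ZMod ℓ → ProdPow ℓ m i) Finset.univ]
        rfl
      rw [hval]
      have hmem : embHom ℓ m i (∏ x, g x) ∈ commutator D :=
        emb_mem_commutator ℓ m i (∏ x, g x) hg
      have : ((SemidirectProduct.inl : _ →* W).comp
          (MonoidHom.mulSingle (fun _ : ZMod ℓ => D) 0)) (embHom ℓ m i (∏ x, g x))
          ∈ commutator W := map_mem_commutator _ hmem
      exact MonoidHom.mem_ker.mp (Abelianization.commutator_subset_ker φ this)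

lemma pow_geomS (e : ℕ) : ∀ i, (e + 1) ^ i = geomS (e + 1) i * e + 1
  | 0 => by simp [geomS]
  | i + 1 => by
      rw [pow_succ, pow_geomS e i]
      show (geomS (e + 1) i * e + 1) * (e + 1) = (geomS (e + 1) i * (e + 1) + 1) * e + 1
      ring

theorem card_conjClasses_commutator_iterWreath (ℓ : ℕ) (hℓ : ℓ.Prime) (m : ℕ) (hm : 1 ≤ m)
    (i : ℕ) (hi : 1 ≤ i) :
    m ^ (ℓ ^ i - 1) ≤
      ℓ ^ ((ℓ ^ i - 1) / (ℓ - 1) + i - 1) *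
        Nat.card (ConjClasses (commutator (IterWreath ℓ m i))) := by
  haveI : NeZero ℓ := ⟨hℓ.pos.ne'⟩
  haveI : NeZero m := ⟨by omega⟩
  haveI : Finite (IterWreath ℓ m i) := finite_iterWreath ℓ m i
  haveI : Finite (ProdPow ℓ m i) := finite_prodPow ℓ m i
  have hl2 : 2 ≤ ℓ := hℓ.two_le
  have hpowpos : 1 ≤ ℓ ^ i := Nat.one_le_pow _ _ hℓ.pos
  set D := IterWreath ℓ m i with hD
  set K : Subgroup D := commutator D with hK
  set N : Subgroup (ProdPow ℓ m i) := (wNorm ℓ m i).ker with hN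
  -- cardinality of the kernel of the norm map
  have ham : m ^ (ℓ ^ i - 1) * m = m ^ ℓ ^ i := by
    rw [← pow_succ]
    congr 1
    omega
  have hker : Nat.card N = m ^ (ℓ ^ i - 1) := by
    have h1 : Nat.card (ProdPow ℓ m i) = Nat.card (ProdPow ℓ m i ⧸ N) * Nat.card N :=
      Subgroup.card_eq_card_quotient_mul_card_subgroup _
    have h2 : Nat.card (ProdPow ℓ m i ⧸ N) = m := by
      rw [Nat.card_congr (QuotientGroup.quotientKerEquivOfSurjective _
        (wNorm_surjective ℓ m i)).toEquiv, card_multiplicative_zmod]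
    rw [card_prodPow, h2] at h1
    have hmm : m * Nat.card N = m * m ^ (ℓ ^ i - 1) := by
      rw [← h1, ← ham, mul_comm]
    exact Nat.eq_of_mul_eq_mul_left (by omega) hmm
  -- the injection into commuting pairs of the commutator subgroup
  have hsq : (m ^ (ℓ ^ i - 1)) ^ 2 ≤ Nat.card (ConjClasses K) * Nat.card K := by
    rw [← card_comm_eq_card_conjClasses_mul_card]
    have hf : Function.Injective (fun p : N × N =>
        (⟨(⟨embHom ℓ m i p.1, emb_mem_commutator ℓ m i p.1 (MonoidHom.mem_ker.mp p.1.2)⟩,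
           ⟨embHom ℓ m i p.2, emb_mem_commutator ℓ m i p.2 (MonoidHom.mem_ker.mp p.2.2)⟩),
          Subtype.ext (by
            show embHom ℓ m i ↑p.1 * embHom ℓ m i ↑p.2 = embHom ℓ m i ↑p.2 * embHom ℓ m i ↑p.1
            rw [← map_mul, ← map_mul, mul_comm])⟩ :
          {q : K × K // Commute q.1 q.2})) := by
      intro p q h
      have h1 : embHom ℓ m i ↑p.1 = embHom ℓ m i ↑q.1 := congrArg (fun r => (r.1.1 : D)) h
      have h2 : embHom ℓ m i ↑p.2 = embHom ℓ m i ↑q.2 := congrArg (fun r => (r.1.2 : D)) h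
      exact Prod.ext (Subtype.ext (embHom_injective ℓ m i h1))
        (Subtype.ext (embHom_injective ℓ m i h2))
    calc (m ^ (ℓ ^ i - 1)) ^ 2 = Nat.card (N × N) := by
          rw [Nat.card_prod, hker]; ring
      _ ≤ _ := Nat.card_le_card_of_injective _ hf
  -- upper bound on the size of the commutator subgroup
  have hKd : Nat.card K * (m * ℓ ^ i) ≤ m ^ ℓ ^ i * ℓ ^ geomS ℓ i := by
    have hle : K ≤ (projHom ℓ m i).ker := Abelianization.commutator_subset_ker _
    have hd2 : Nat.card K ≤ Nat.card (projHom ℓ m i).ker := Subgroup.card_le_of_le hle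
    have h1 : Nat.card D = Nat.card (D ⧸ (projHom ℓ m i).ker) *
        Nat.card (projHom ℓ m i).ker :=
      Subgroup.card_eq_card_quotient_mul_card_subgroup _
    have h2 : Nat.card (D ⧸ (projHom ℓ m i).ker) = m * ℓ ^ i := by
      rw [Nat.card_congr (QuotientGroup.quotientKerEquivOfSurjective _
        (projHom_surjective ℓ m i)).toEquiv, card_tgt]
    rw [card_iterWreath, h2] at h1
    calc Nat.card K * (m * ℓ ^ i) ≤ Nat.card (projHom ℓ m i).ker * (m * ℓ ^ i) :=
          Nat.mul_le_mul_right _ hd2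
      _ = m ^ ℓ ^ i * ℓ ^ geomS ℓ i := by rw [h1]; ring
  -- combine
  have hstep : m ^ (ℓ ^ i - 1) * ℓ ^ i * m ^ ℓ ^ i ≤
      (Nat.card (ConjClasses K) * ℓ ^ geomS ℓ i) * m ^ ℓ ^ i := by
    calc m ^ (ℓ ^ i - 1) * ℓ ^ i * m ^ ℓ ^ i
        = (m ^ (ℓ ^ i - 1)) ^ 2 * (m * ℓ ^ i) := by rw [← ham]; ring
      _ ≤ (Nat.card (ConjClasses K) * Nat.card K) * (m * ℓ ^ i) :=
          Nat.mul_le_mul_right _ hsq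
      _ = Nat.card (ConjClasses K) * (Nat.card K * (m * ℓ ^ i)) := by ring
      _ ≤ Nat.card (ConjClasses K) * (m ^ ℓ ^ i * ℓ ^ geomS ℓ i) :=
          Nat.mul_le_mul_left _ hKd
      _ = (Nat.card (ConjClasses K) * ℓ ^ geomS ℓ i) * m ^ ℓ ^ i := by ring
  have hmain : m ^ (ℓ ^ i - 1) * ℓ ^ i ≤ Nat.card (ConjClasses K) * ℓ ^ geomS ℓ i :=
    Nat.le_of_mul_le_mul_right hstep (Nat.pow_pos (by omega))
  have hdiv : (ℓ ^ i - 1) / (ℓ - 1) = geomS ℓ i := by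
    obtain ⟨e, rfl⟩ : ∃ e, ℓ = e + 1 := ⟨ℓ - 1, by omega⟩
    have he : 0 < e := by omega
    rw [pow_geomS e i, Nat.add_sub_cancel, Nat.add_sub_cancel, Nat.mul_div_cancel _ he]
  rw [hdiv]
  calc m ^ (ℓ ^ i - 1) ≤ m ^ (ℓ ^ i - 1) * ℓ ^ i :=
        Nat.le_mul_of_pos_right _ (by positivity)
    _ ≤ Nat.card (ConjClasses K) * ℓ ^ geomS ℓ i := hmain
    _ ≤ Nat.card (ConjClasses K) * ℓ ^ (geomS ℓ i + i - 1) :=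
        Nat.mul_le_mul_left _ (Nat.pow_le_pow_right hℓ.one_lt.le (by omega))
    _ = ℓ ^ (geomS ℓ i + i - 1) * Nat.card (ConjClasses K) := mul_comm _ _
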